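/- Let Q be a symmetric n×n real matrix, f ∈ ℝⁿ, and suppose σ̄ ∈ S⁻ = {σ > 0 : Q + 2Diag(σ) negative definite} is a critical point of P^d(σ) = -(1/2)(f+σ)ᵀ[Q+2Diag(σ)]⁻¹(f+σ). Then σ̄ is a global minimizer of P^d on S⁻. -/

import Mathlib

open Matrix

section Aux

variable {n : ℕ}

lemma herm_of_symm (Q : Matrix (Fin n) (Fin n) ℝ) (hQ : Q.IsSymm) (σ : Fin n → ℝ) :
    (-(Q + 2 • Matrix.diagonal σ)).IsHermitian := by
  rw [Matrix.IsHermitian, conjTranspose_eq_transpose_of_trivial]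
  rw [two_smul]
  simp [Matrix.transpose_add, hQ.eq]

lemma transpose_eq_of_posdef {M : Matrix (Fin n) (Fin n) ℝ} (hM : M.PosDef) : Mᵀ = M := by
  have := hM.1
  rwa [Matrix.IsHermitian, conjTranspose_eq_transpose_of_trivial] at this

lemma quad_key {M : Matrix (Fin n) (Fin n) ℝ} (hM : M.PosDef) (x y : Fin n → ℝ) :
    2 * (y ⬝ᵥ x) - y ⬝ᵥ M *ᵥ y ≤ x ⬝ᵥ M⁻¹ *ᵥ x := by
  have hdet : IsUnit M.det := isUnit_iff_ne_zero.mpr (ne_of_gt hM.det_pos)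
  have hMT : Mᵀ = M := transpose_eq_of_posdef hM
  set w : Fin n → ℝ := M⁻¹ *ᵥ x with hw
  have hMw : M *ᵥ w = x := by
    rw [hw, mulVec_mulVec, Matrix.mul_nonsing_inv _ hdet, one_mulVec]
  have h0 : 0 ≤ (y - w) ⬝ᵥ M *ᵥ (y - w) := by
    have := hM.posSemidef.dotProduct_mulVec_nonneg (y - w)
    simpa using this
  have h1 : w ⬝ᵥ M *ᵥ y = x ⬝ᵥ y := by
    rw [Matrix.dotProduct_mulVec, ← Matrix.mulVec_transpose, hMT, hMw]
  have h2 : y ⬝ᵥ x = x ⬝ᵥ y := dotProduct_comm _ _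
  have h3 : w ⬝ᵥ x = x ⬝ᵥ w := dotProduct_comm _ _
  have hexp : (y - w) ⬝ᵥ M *ᵥ (y - w)
      = y ⬝ᵥ M *ᵥ y - y ⬝ᵥ x - x ⬝ᵥ y + x ⬝ᵥ w := by
    simp only [mulVec_sub, hMw, sub_dotProduct, dotProduct_sub, h1, h3]
    linarith
  rw [hexp] at h0
  linarith

lemma quad_eq {M : Matrix (Fin n) (Fin n) ℝ} (hM : M.PosDef) (x : Fin n → ℝ) :
    x ⬝ᵥ M⁻¹ *ᵥ x
      = 2 * ((M⁻¹ *ᵥ x) ⬝ᵥ x) - (M⁻¹ *ᵥ x) ⬝ᵥ M *ᵥ (M⁻¹ *ᵥ x) := by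
  have hdet : IsUnit M.det := isUnit_iff_ne_zero.mpr (ne_of_gt hM.det_pos)
  have hMw : M *ᵥ (M⁻¹ *ᵥ x) = x := by
    rw [mulVec_mulVec, Matrix.mul_nonsing_inv _ hdet, one_mulVec]
  rw [hMw, dotProduct_comm x]
  ring

lemma dot_self_nonneg (x : Fin n → ℝ) : 0 ≤ x ⬝ᵥ x :=
  Finset.sum_nonneg fun i _ => mul_self_nonneg (x i)

lemma coercive {M : Matrix (Fin n) (Fin n) ℝ} (hM : M.PosDef) :
    ∃ c : ℝ, 0 < c ∧ ∀ x : Fin n → ℝ, c * (x ⬝ᵥ x) ≤ x ⬝ᵥ M *ᵥ x := by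
  set K : ℝ := (∑ i, ∑ j, |M⁻¹ i j|) + 1 with hKdef
  have hK0 : 0 < K := by positivity
  have hbound : ∀ x : Fin n → ℝ, x ⬝ᵥ M⁻¹ *ᵥ x ≤ K * (x ⬝ᵥ x) := by
    intro x
    have hterm : ∀ i j, x i * (M⁻¹ i j * x j) ≤ |M⁻¹ i j| * (x ⬝ᵥ x) := by
      intro i j
      have hii : x i * x i ≤ x ⬝ᵥ x :=
        Finset.single_le_sum (f := fun k => x k * x k)
          (fun k _ => mul_self_nonneg (x k)) (Finset.mem_univ i)
      have hjj : x j * x j ≤ x ⬝ᵥ x :=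
        Finset.single_le_sum (f := fun k => x k * x k)
          (fun k _ => mul_self_nonneg (x k)) (Finset.mem_univ j)
      have h1 : x i * (M⁻¹ i j * x j) ≤ |M⁻¹ i j| * |x i * x j| := by
        calc x i * (M⁻¹ i j * x j) = M⁻¹ i j * (x i * x j) := by ring
          _ ≤ |M⁻¹ i j * (x i * x j)| := le_abs_self _
          _ = |M⁻¹ i j| * |x i * x j| := abs_mul _ _
      have h2 : |x i * x j| ≤ x ⬝ᵥ x := by
        rw [abs_mul]
        nlinarith [sq_nonneg (|x i| - |x j|), sq_abs (x i), sq_abs (x j),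
          abs_nonneg (x i), abs_nonneg (x j)]
      exact le_trans h1 (mul_le_mul_of_nonneg_left h2 (abs_nonneg _))
    have hxx := dot_self_nonneg x
    calc x ⬝ᵥ M⁻¹ *ᵥ x = ∑ i, ∑ j, x i * (M⁻¹ i j * x j) := by
          simp [dotProduct, mulVec, Finset.mul_sum]
      _ ≤ ∑ i, ∑ j, |M⁻¹ i j| * (x ⬝ᵥ x) := by
          refine Finset.sum_le_sum fun i _ => Finset.sum_le_sum fun j _ => hterm i j
      _ = (∑ i, ∑ j, |M⁻¹ i j|) * (x ⬝ᵥ x) := by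
          rw [Finset.sum_mul]
          exact Finset.sum_congr rfl fun i _ => (Finset.sum_mul _ _ _).symm
      _ ≤ K * (x ⬝ᵥ x) := by nlinarith
  refine ⟨1 / K, by positivity, fun x => ?_⟩
  have h := quad_key hM.inv x ((1 / K) • x)
  rw [Matrix.nonsing_inv_nonsing_inv _ (isUnit_iff_ne_zero.mpr (ne_of_gt hM.det_pos))] at h
  have e1 : ((1 / K) • x) ⬝ᵥ x = (1 / K) * (x ⬝ᵥ x) := by
    rw [smul_dotProduct]; simp [smul_eq_mul]
  have e2 : ((1 / K) • x) ⬝ᵥ M⁻¹ *ᵥ ((1 / K) • x)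
      = (1 / K)^2 * (x ⬝ᵥ M⁻¹ *ᵥ x) := by
    rw [mulVec_smul, dotProduct_smul, smul_dotProduct, smul_eq_mul, smul_eq_mul]
    ring
  rw [e1, e2] at h
  have hb := hbound x
  have hscale : (1 / K)^2 * (x ⬝ᵥ M⁻¹ *ᵥ x) ≤ (1 / K)^2 * (K * (x ⬝ᵥ x)) := by
    have : (0:ℝ) ≤ (1 / K)^2 := sq_nonneg _
    exact mul_le_mul_of_nonneg_left hb this
  have hKne : K ≠ 0 := ne_of_gt hK0
  have hpow : (1 / K)^2 * K = 1 / K := by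
    rw [one_div, sq, mul_assoc, inv_mul_cancel₀ hKne, mul_one]
  have hid : (1 / K)^2 * (K * (x ⬝ᵥ x)) = (1 / K) * (x ⬝ᵥ x) := by
    rw [← mul_assoc, hpow]
  linarith

lemma dot_neg_eval (Q : Matrix (Fin n) (Fin n) ℝ) (σ x y : Fin n → ℝ) :
    x ⬝ᵥ ((-(Q + 2 • Matrix.diagonal σ)) *ᵥ y)
      = -(x ⬝ᵥ Q *ᵥ y) - 2 * ∑ i, σ i * (x i * y i) := by
  have hdiag : x ⬝ᵥ (Matrix.diagonal σ *ᵥ y) = ∑ i, σ i * (x i * y i) := by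
    simp only [dotProduct, mulVec_diagonal]
    exact Finset.sum_congr rfl fun i _ => by ring
  rw [neg_mulVec, dotProduct_neg, add_mulVec, dotProduct_add,
    two_smul, add_mulVec, dotProduct_add, hdiag]
  ring

end Aux

theorem global_min_of_Pd_on_Sminus
    (n : ℕ) (Q : Matrix (Fin n) (Fin n) ℝ) (hQ : Q.IsSymm) (f : Fin n → ℝ)
    (Pd : (Fin n → ℝ) → ℝ)
    (hPd : ∀ σ, Pd σ =
      -(1 / 2 : ℝ) * ((f + σ) ⬝ᵥ (Q + 2 • Matrix.diagonal σ)⁻¹.mulVec (f + σ)))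
    (σb : Fin n → ℝ)
    (hσb : (∀ i, 0 < σb i) ∧ (-(Q + 2 • Matrix.diagonal σb)).PosDef)
    (hcrit : HasFDerivAt Pd (0 : (Fin n → ℝ) →L[ℝ] ℝ) σb) :
    ∀ σ : Fin n → ℝ, (∀ i, 0 < σ i) → (-(Q + 2 • Matrix.diagonal σ)).PosDef →
      Pd σb ≤ Pd σ := by
  obtain ⟨-, hB⟩ := hσb
  set N : (Fin n → ℝ) → Matrix (Fin n) (Fin n) ℝ :=
    fun σ => -(Q + 2 • Matrix.diagonal σ) with hN
  -- formula for Pd on S⁻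
  have hPdeq : ∀ σ, (N σ).PosDef →
      Pd σ = (1 / 2 : ℝ) * ((f + σ) ⬝ᵥ (N σ)⁻¹ *ᵥ (f + σ)) := by
    intro σ hσ
    have hdet : IsUnit (N σ).det := isUnit_iff_ne_zero.mpr (ne_of_gt hσ.det_pos)
    have hinv : (Q + 2 • Matrix.diagonal σ)⁻¹ = -(N σ)⁻¹ := by
      apply Matrix.inv_eq_right_inv
      have : (Q + 2 • Matrix.diagonal σ) = -(N σ) := by simp [hN]
      rw [this, neg_mul_neg, Matrix.mul_nonsing_inv _ hdet]
    rw [hPd σ, hinv, neg_mulVec, dotProduct_neg]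
    ring
  -- the touching affine minorant
  set yb : Fin n → ℝ := (N σb)⁻¹ *ᵥ (f + σb) with hyb
  set v : Fin n → ℝ := fun i => yb i + yb i ^ 2 with hv
  -- evaluation of the affine function
  have ell_eval : ∀ σ : Fin n → ℝ,
      (1 / 2 : ℝ) * (2 * (yb ⬝ᵥ (f + σ)) - yb ⬝ᵥ (N σ) *ᵥ yb)
        = (yb ⬝ᵥ f + (1 / 2 : ℝ) * (yb ⬝ᵥ Q *ᵥ yb)) + σ ⬝ᵥ v := by
    intro σ
    rw [hN, dot_neg_eval, dotProduct_add]
    have h1 : yb ⬝ᵥ σ = ∑ i, σ i * yb i := by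
      simp [dotProduct, mul_comm]
    have h2 : σ ⬝ᵥ v = (∑ i, σ i * yb i) + ∑ i, σ i * (yb i * yb i) := by
      rw [hv, dotProduct, ← Finset.sum_add_distrib]
      exact Finset.sum_congr rfl fun i _ => by ring
    rw [h1, h2]
    ring
  -- value at σb
  have hPdb : Pd σb = (yb ⬝ᵥ f + (1 / 2 : ℝ) * (yb ⬝ᵥ Q *ᵥ yb)) + σb ⬝ᵥ v := by
    rw [hPdeq σb hB, quad_eq hB, ← hyb, ← ell_eval σb]
  -- the minorant property
  have hlow : ∀ σ, (N σ).PosDef → Pd σb + (σ ⬝ᵥ v - σb ⬝ᵥ v) ≤ Pd σ := by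
    intro σ hσ
    have h := quad_key hσ (f + σ) yb
    have h' : (1 / 2 : ℝ) * (2 * (yb ⬝ᵥ (f + σ)) - yb ⬝ᵥ (N σ) *ᵥ yb)
        ≤ (1 / 2 : ℝ) * ((f + σ) ⬝ᵥ (N σ)⁻¹ *ᵥ (f + σ)) := by linarith
    rw [ell_eval σ] at h'
    rw [hPdeq σ hσ] at *
    rw [hPdb]
    linarith
  -- criticality forces v = 0
  have hv0 : ∀ i, v i = 0 := by
    -- continuous linear map δ ↦ δ ⬝ᵥ v
    set Llin : (Fin n → ℝ) →ₗ[ℝ] ℝ :=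
      { toFun := fun δ => δ ⬝ᵥ v
        map_add' := fun a b => add_dotProduct a b v
        map_smul' := fun r a => smul_dotProduct r a v } with hLlin
    set L : (Fin n → ℝ) →L[ℝ] ℝ := LinearMap.toContinuousLinearMap Llin with hL
    have hgder : HasFDerivAt (fun σ : Fin n → ℝ => Pd σb - σb ⬝ᵥ v + σ ⬝ᵥ v) L σb := by
      have := (L.hasFDerivAt (x := σb)).const_add (Pd σb - σb ⬝ᵥ v)
      exact this
    have hhder : HasFDerivAt
        (fun σ => Pd σ - (Pd σb - σb ⬝ᵥ v + σ ⬝ᵥ v)) ((0 : (Fin n → ℝ) →L[ℝ] ℝ) - L) σb :=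
      hcrit.sub hgder
    -- local min at σb
    have hev : ∀ᶠ σ in nhds σb, (N σ).PosDef := by
      obtain ⟨c, hc, hcoer⟩ := coercive hB
      have hball := Metric.ball_mem_nhds σb (show (0:ℝ) < c / 2 by linarith)
      refine Filter.eventually_of_mem hball fun σ hσ => ?_
      rw [Metric.mem_ball, dist_eq_norm] at hσ
      refine Matrix.PosDef.of_dotProduct_mulVec_pos (herm_of_symm Q hQ σ) fun x hx => ?_
      have hxx : 0 < x ⬝ᵥ x :=
        lt_of_le_of_ne (dot_self_nonneg x) (Ne.symm (mt dotProduct_self_eq_zero.mp hx))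
      have hNx : x ⬝ᵥ ((N σ) *ᵥ x)
          = x ⬝ᵥ ((N σb) *ᵥ x) - 2 * ∑ i, (σ i - σb i) * (x i * x i) := by
        have e1 : x ⬝ᵥ ((N σ) *ᵥ x)
            = -(x ⬝ᵥ Q *ᵥ x) - 2 * ∑ i, σ i * (x i * x i) := dot_neg_eval Q σ x x
        have e2 : x ⬝ᵥ ((N σb) *ᵥ x)
            = -(x ⬝ᵥ Q *ᵥ x) - 2 * ∑ i, σb i * (x i * x i) := dot_neg_eval Q σb x x
        have e3 : ∑ i, (σ i - σb i) * (x i * x i)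
            = (∑ i, σ i * (x i * x i)) - ∑ i, σb i * (x i * x i) := by
          rw [← Finset.sum_sub_distrib]
          exact Finset.sum_congr rfl fun i _ => by ring
        rw [e1, e2, e3]
        ring
      have hsum : ∑ i, (σ i - σb i) * (x i * x i) ≤ ‖σ - σb‖ * (x ⬝ᵥ x) := by
        have hterm : ∀ i, (σ i - σb i) * (x i * x i) ≤ ‖σ - σb‖ * (x i * x i) := by
          intro i
          have h1 : |(σ - σb) i| ≤ ‖σ - σb‖ := by
            simpa using norm_le_pi_norm (σ - σb) i
          have h2 : (σ i - σb i) ≤ ‖σ - σb‖ := by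
            have he : (σ - σb) i = σ i - σb i := rfl
            rw [he] at h1
            cases abs_le.mp h1 with
            | intro hl hr => linarith
          nlinarith [mul_self_nonneg (x i)]
        calc ∑ i, (σ i - σb i) * (x i * x i) ≤ ∑ i, ‖σ - σb‖ * (x i * x i) :=
              Finset.sum_le_sum fun i _ => hterm i
          _ = ‖σ - σb‖ * (x ⬝ᵥ x) := by rw [← Finset.mul_sum]; rfl
      have hstrict : ‖σ - σb‖ * (x ⬝ᵥ x) < (c / 2) * (x ⬝ᵥ x) :=
        mul_lt_mul_of_pos_right hσ hxx
      have hcoerx : c * (x ⬝ᵥ x) ≤ x ⬝ᵥ ((N σb) *ᵥ x) := hcoer x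
      have hstar : star x = x := by simp
      rw [hstar]
      rw [show x ⬝ᵥ ((-(Q + 2 • Matrix.diagonal σ)) *ᵥ x) = x ⬝ᵥ ((N σ) *ᵥ x) from rfl, hNx]
      linarith
    have hmin : IsLocalMin (fun σ => Pd σ - (Pd σb - σb ⬝ᵥ v + σ ⬝ᵥ v)) σb := by
      refine Filter.Eventually.mono hev fun σ hσ => ?_
      have := hlow σ hσ
      show Pd σb - (Pd σb - σb ⬝ᵥ v + σb ⬝ᵥ v) ≤ Pd σ - (Pd σb - σb ⬝ᵥ v + σ ⬝ᵥ v)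
      linarith
    have hzero := hmin.hasFDerivAt_eq_zero hhder
    have hL0 : L = 0 := by
      have : (0 : (Fin n → ℝ) →L[ℝ] ℝ) - L = 0 := hzero
      rwa [zero_sub, neg_eq_zero] at this
    intro i
    have : L (Pi.single i 1) = 0 := by rw [hL0]; rfl
    have hLi : L (Pi.single i 1) = v i := by
      show (Pi.single i 1) ⬝ᵥ v = v i
      rw [single_dotProduct, one_mul]
    rw [hLi] at this
    exact this
  -- conclude
  intro σ hσpos hσPD
  have := hlow σ hσPD
  have h1 : σ ⬝ᵥ v = 0 := by
    rw [show v = 0 from funext hv0, dotProduct_zero]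
  have h2 : σb ⬝ᵥ v = 0 := by
    rw [show v = 0 from funext hv0, dotProduct_zero]
  rw [h1, h2] at this
  linarith
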